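/- Let V ⊆ ℝ^d be a finite point configuration and let H = {x ∈ ℝ^d : g(x) = 0} be a supporting hyperplane of V, i.e., g is a nonzero affine-linear function that is nonnegative on V and vanishes at some point of V. Then Th(V ∩ H) ≤ Th(V) and Lev(V ∩ H) ≤ Lev(V). In other words, the classes of configurations of Theta rank at most k and of levelness at most k are face-hereditary. -/

import Mathlib

open MvPolynomial Set
open scoped Classical

noncomputable section

/-- `f` is an affine-linear polynomial (degree at most one). -/
def IsAffLin {ι : Type} (f : MvPolynomial ι ℝ) : Prop := f.totalDegree ≤ 1

/-- `f` is nonnegative on `V`. -/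
def NonnegOn {ι : Type} (V : Set (ι → ℝ)) (f : MvPolynomial ι ℝ) : Prop :=
  ∀ v ∈ V, 0 ≤ eval v f

/-- `ℓ` is `k`-sos with respect to `V`: on `V` it agrees with a sum of squares of
polynomials of degree at most `k`. -/
def IsKSos {ι : Type} (V : Set (ι → ℝ)) (k : ℕ) (ℓ : MvPolynomial ι ℝ) : Prop :=
  ∃ (s : ℕ) (h : Fin s → MvPolynomial ι ℝ),
    (∀ i, (h i).totalDegree ≤ k) ∧ ∀ v ∈ V, eval v ℓ = ∑ i, (eval v (h i)) ^ 2

/-- The Theta rank of a point configuration `V`. -/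
def thetaRank {ι : Type} (V : Set (ι → ℝ)) : ℕ :=
  sInf {k | ∀ ℓ, IsAffLin ℓ → NonnegOn V ℓ → IsKSos V k ℓ}

/-- `F` is a face of `V`. -/
def IsFaceOf {ι : Type} (V F : Set (ι → ℝ)) : Prop :=
  ∃ g, IsAffLin g ∧ NonnegOn V g ∧ F = {v ∈ V | eval v g = 0}

/-- `F` is a facet of `V`: an inclusion-maximal proper face. -/
def IsFacetOf {ι : Type} (V F : Set (ι → ℝ)) : Prop :=
  IsFaceOf V F ∧ F ≠ V ∧ ∀ F', IsFaceOf V F' → F' ≠ V → F ⊆ F' → F' = F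

/-- `ℓ` is a facet-defining affine-linear function for `V`. -/
def IsFacetDefining {ι : Type} (V : Set (ι → ℝ)) (ℓ : MvPolynomial ι ℝ) : Prop :=
  IsAffLin ℓ ∧ NonnegOn V ℓ ∧ IsFacetOf V {v ∈ V | eval v ℓ = 0}

/-- The levelness of a point configuration `V`. -/
def levelness {ι : Type} (V : Set (ι → ℝ)) : ℕ :=
  sInf {k | ∀ ℓ, IsFacetDefining V ℓ → ((fun v => eval v ℓ) '' V).ncard ≤ k}

/-! ### Auxiliary lemmas -/

/-- A polynomial of degree ≤ 1 that is 1 at `v` and 0 at `w` (when `v ≠ w`). -/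
def sepPoly {ι : Type} (v w : ι → ℝ) : MvPolynomial ι ℝ :=
  if h : ∃ i, v i ≠ w i then
    C (v h.choose - w h.choose)⁻¹ * (X h.choose - C (w h.choose)) else 1

lemma sepPoly_totalDegree {ι : Type} (v w : ι → ℝ) : (sepPoly v w).totalDegree ≤ 1 := by
  unfold sepPoly
  split
  · refine le_trans (totalDegree_mul _ _) ?_
    have h1 : (X (R := ℝ) (Exists.choose ‹∃ i, v i ≠ w i›) -
        C (w (Exists.choose ‹∃ i, v i ≠ w i›))).totalDegree ≤ 1 := by
      rw [sub_eq_add_neg]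
      refine le_trans (totalDegree_add _ _) ?_
      simp [totalDegree_X, totalDegree_neg]
    simpa [totalDegree_C] using h1
  · simp [totalDegree_one]

lemma sepPoly_eval_self {ι : Type} {v w : ι → ℝ} (h : v ≠ w) : eval v (sepPoly v w) = 1 := by
  have he : ∃ i, v i ≠ w i := Function.ne_iff.mp h
  have hne := he.choose_spec
  rw [sepPoly, dif_pos he]
  simp [sub_ne_zero.mpr hne, inv_mul_cancel₀]

lemma sepPoly_eval_other {ι : Type} {v w : ι → ℝ} (h : v ≠ w) : eval w (sepPoly v w) = 0 := by
  have he : ∃ i, v i ≠ w i := Function.ne_iff.mp h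
  rw [sepPoly, dif_pos he]
  simp

/-- On a finite set, every function can be interpolated by a polynomial whose degree is
bounded uniformly in terms of the set. -/
lemma exists_interpolation {ι : Type} (V : Set (ι → ℝ)) (hV : V.Finite) :
    ∃ k : ℕ, ∀ f : (ι → ℝ) → ℝ, ∃ p : MvPolynomial ι ℝ,
      p.totalDegree ≤ k ∧ ∀ v ∈ V, eval v p = f v := by
  classical
  refine ⟨hV.toFinset.card, fun f => ?_⟩
  set s := hV.toFinset with hs
  refine ⟨∑ v ∈ s, C (f v) * ∏ w ∈ s.erase v, sepPoly v w, ?_, ?_⟩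
  · refine le_trans (totalDegree_finset_sum _ _) ?_
    refine Finset.sup_le fun v hv => ?_
    refine le_trans (totalDegree_mul _ _) ?_
    have h2 : (∏ w ∈ s.erase v, sepPoly v w).totalDegree ≤ ∑ w ∈ s.erase v, 1 := by
      refine le_trans (totalDegree_finset_prod _ _) ?_
      exact Finset.sum_le_sum fun w _ => sepPoly_totalDegree v w
    simp only [totalDegree_C, zero_add]
    refine le_trans h2 ?_
    simp only [Finset.sum_const, smul_eq_mul, mul_one]
    exact Finset.card_erase_le
  · intro u hu
    have hus : u ∈ s := hV.mem_toFinset.mpr hu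
    rw [map_sum, Finset.sum_eq_single u]
    · rw [eval_mul, eval_C, map_prod]
      rw [Finset.prod_congr rfl (fun w hw => sepPoly_eval_self
        (fun h : u = w => (Finset.mem_erase.mp hw).1 h.symm))]
      simp
    · intro v hv hvu
      rw [eval_mul, map_prod, Finset.prod_eq_zero (Finset.mem_erase.mpr ⟨hvu.symm, hus⟩)
        (sepPoly_eval_other (fun h : v = u => hvu h)), mul_zero]
    · intro h; exact absurd hus h

lemma exists_shift {ι : Type} (V : Set (ι → ℝ)) (hV : V.Finite)
    (g ℓ : MvPolynomial ι ℝ) :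
    ∃ t : ℝ, ∀ v ∈ V, 0 < eval v g → 0 < eval v ℓ + t * eval v g := by
  obtain ⟨T, hT⟩ := ((hV.image (fun v => -eval v ℓ / eval v g)).bddAbove)
  refine ⟨T + 1, fun v hv hg => ?_⟩
  have h1 : -eval v ℓ / eval v g ≤ T := hT ⟨v, hv, rfl⟩
  have h2 : -eval v ℓ / eval v g < T + 1 := by linarith
  have h3 : -eval v ℓ < (T + 1) * eval v g := (div_lt_iff₀ hg).mp h2
  linarith

/-- A function nonnegative on the face `{g = 0}` of `V` can be shifted by a multiple of `g`
to a function nonnegative on all of `V`, agreeing with it on the face, and vanishing on `V`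
only inside the face. -/
lemma shift_props {ι : Type} {V : Set (ι → ℝ)} (hV : V.Finite)
    {g ℓ : MvPolynomial ι ℝ} (hgV : NonnegOn V g)
    (hℓF : ∀ v ∈ V, eval v g = 0 → 0 ≤ eval v ℓ)
    (hgaff : IsAffLin g) (hℓaff : IsAffLin ℓ) :
    ∃ L : MvPolynomial ι ℝ, IsAffLin L ∧ NonnegOn V L ∧
      (∀ v ∈ V, eval v g = 0 → eval v L = eval v ℓ) ∧
      (∀ v ∈ V, eval v L = 0 → eval v g = 0) := by
  obtain ⟨t, ht⟩ := exists_shift V hV g ℓ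
  refine ⟨ℓ + C t * g, ?_, ?_, ?_, ?_⟩
  · refine le_trans (totalDegree_add _ _) (max_le hℓaff ?_)
    refine le_trans (totalDegree_mul _ _) ?_
    simpa [totalDegree_C, IsAffLin] using hgaff
  · intro v hv
    rcases lt_or_eq_of_le (hgV v hv) with h | h
    · have := ht v hv h
      simp only [map_add, eval_mul, eval_C]
      linarith
    · simp only [map_add, eval_mul, eval_C, ← h]
      have := hℓF v hv h.symm
      linarith
  · intro v hv h0
    simp [h0]
  · intro v hv h0
    by_contra hne
    have hg : 0 < eval v g := lt_of_le_of_ne (hgV v hv) (Ne.symm hne)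
    have := ht v hv hg
    simp only [map_add, eval_mul, eval_C] at h0
    linarith

lemma sub_mul_affLin {ι : Type} {h ℓ : MvPolynomial ι ℝ} (hh : IsAffLin h)
    (hℓ : IsAffLin ℓ) (c : ℝ) : IsAffLin (h - C c * ℓ) := by
  rw [sub_eq_add_neg]
  refine le_trans (totalDegree_add _ _) (max_le hh ?_)
  rw [totalDegree_neg]
  refine le_trans (totalDegree_mul _ _) ?_
  simpa [totalDegree_C, IsAffLin] using hℓ

/-! ### Theta rank part -/

lemma theta_part {d : ℕ} (V : Set (Fin d → ℝ)) (hVfin : V.Finite)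
    (g : MvPolynomial (Fin d) ℝ) (hg : IsAffLin g) (hgV : NonnegOn V g) :
    thetaRank {v ∈ V | eval v g = 0} ≤ thetaRank V := by
  obtain ⟨k₀, hk₀⟩ := exists_interpolation V hVfin
  have hSV : ∀ ℓ, IsAffLin ℓ → NonnegOn V ℓ → IsKSos V (thetaRank V) ℓ := by
    apply Nat.sInf_mem (s := {k | ∀ ℓ, IsAffLin ℓ → NonnegOn V ℓ → IsKSos V k ℓ})
    refine ⟨k₀, fun ℓ _ hℓ => ?_⟩
    obtain ⟨p, hpd, hpe⟩ := hk₀ (fun v => Real.sqrt (eval v ℓ))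
    exact ⟨1, fun _ => p, fun _ => hpd, fun v hv => by
      rw [Fin.sum_univ_one, hpe v hv, Real.sq_sqrt (hℓ v hv)]⟩
  apply Nat.sInf_le
  intro ℓ hℓa hℓF
  obtain ⟨L, hLa, hLV, hLF, _⟩ := shift_props hVfin hgV (fun v hv h => hℓF v ⟨hv, h⟩) hg hℓa
  obtain ⟨s, hfun, hdeg, heq⟩ := hSV L hLa hLV
  exact ⟨s, hfun, hdeg, fun v hv => by rw [← hLF v hv.1 hv.2]; exact heq v hv.1⟩

/-! ### Levelness part -/

lemma level_part {d : ℕ} (V : Set (Fin d → ℝ)) (hVfin : V.Finite)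
    (g : MvPolynomial (Fin d) ℝ) (hg : IsAffLin g) (hgV : NonnegOn V g) :
    levelness {v ∈ V | eval v g = 0} ≤ levelness V := by
  classical
  set F : Set (Fin d → ℝ) := {v ∈ V | eval v g = 0} with hFdef
  have hFV : F ⊆ V := fun v hv => hv.1
  set k := levelness V with hk
  have hkV : ∀ ℓ, IsFacetDefining V ℓ → ((fun v => eval v ℓ) '' V).ncard ≤ k := by
    apply Nat.sInf_mem (s := {k | ∀ ℓ, IsFacetDefining V ℓ → ((fun v => eval v ℓ) '' V).ncard ≤ k})
    exact ⟨V.ncard, fun ℓ _ => Set.ncard_image_le hVfin⟩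
  apply Nat.sInf_le
  intro ℓ hℓ
  obtain ⟨hℓa, hℓF, hface', hne', hmax'⟩ := hℓ
  set F' : Set (Fin d → ℝ) := {v ∈ F | eval v ℓ = 0} with hF'def
  have hF'F : F' ⊆ F := fun v hv => hv.1
  -- shift ℓ to a globally nonnegative L with zero set F' inside V
  obtain ⟨L, hLa, hLV, hLF, hLz⟩ :=
    shift_props hVfin hgV (fun v hv h => hℓF v ⟨hv, h⟩) hg hℓa
  have hZL : {v ∈ V | eval v L = 0} = F' := by
    ext v
    constructor
    · rintro ⟨hvV, hv0⟩
      have hgv : eval v g = 0 := hLz v hvV hv0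
      have : eval v ℓ = 0 := by rw [← hLF v hvV hgv]; exact hv0
      exact ⟨⟨hvV, hgv⟩, this⟩
    · rintro ⟨⟨hvV, hgv⟩, hv0⟩
      exact ⟨hvV, by rw [hLF v hvV hgv]; exact hv0⟩
  have hF'V : F' ≠ V := by
    intro hEq
    exact hne' (subset_antisymm hF'F (hEq ▸ hFV))
  -- the family of proper faces of V meeting F exactly in F'
  set 𝒯 : Set (Set (Fin d → ℝ)) := {G | IsFaceOf V G ∧ G ≠ V ∧ F ∩ G = F'} with h𝒯def
  have h𝒯fin : 𝒯.Finite := by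
    refine hVfin.finite_subsets.subset fun G hG => ?_
    obtain ⟨⟨p, _, _, hp⟩, _, _⟩ := hG
    rw [hp]; exact fun v hv => hv.1
  have hF'𝒯 : F' ∈ 𝒯 :=
    ⟨⟨L, hLa, hLV, hZL.symm⟩, hF'V, Set.inter_eq_self_of_subset_right hF'F⟩
  obtain ⟨G, hG𝒯, hGmax⟩ := Set.Finite.exists_maximalFor Set.ncard 𝒯 h𝒯fin ⟨F', hF'𝒯⟩
  obtain ⟨⟨h, hha, hhV, hGdef⟩, hGV, hGF⟩ := hG𝒯
  have hGsub : G ⊆ V := by rw [hGdef]; exact fun v hv => hv.1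
  have hF'G : F' ⊆ G := by rw [← hGF]; exact fun v hv => hv.2
  -- any member of 𝒯 containing G equals G, by maximality
  have hGtop : ∀ G₃ ∈ 𝒯, G ⊆ G₃ → G₃ = G := by
    intro G₃ hG₃ hsub
    have hG₃sub : G₃ ⊆ V := by
      obtain ⟨⟨p, _, _, hp⟩, _, _⟩ := hG₃
      rw [hp]; exact fun v hv => hv.1
    have hle : G.ncard ≤ G₃.ncard := Set.ncard_le_ncard hsub (hVfin.subset hG₃sub)
    have heq := @hGmax G₃ hG₃ hle
    exact (Set.eq_of_subset_of_ncard_le hsub heq.ge (hVfin.subset hG₃sub)).symm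
  -- G is a facet of V
  have hGfacet : IsFacetOf V G := by
    refine ⟨⟨h, hha, hhV, hGdef⟩, hGV, fun G₂ hG₂f hG₂V hGG₂ => ?_⟩
    by_contra hne2
    obtain ⟨h₂, h₂a, h₂V, hG₂def⟩ := hG₂f
    have hG₂sub : G₂ ⊆ V := by rw [hG₂def]; exact fun v hv => hv.1
    have hmemG₂ : ∀ v, v ∈ G₂ ↔ v ∈ V ∧ eval v h₂ = 0 := fun v => by rw [hG₂def]; rfl
    have hFG₂face : IsFaceOf F (F ∩ G₂) := by
      refine ⟨h₂, h₂a, fun v hv => h₂V v (hFV hv), ?_⟩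
      ext v
      simp only [Set.mem_inter_iff, Set.mem_setOf_eq]
      constructor
      · rintro ⟨hvF, hvG₂⟩; exact ⟨hvF, ((hmemG₂ v).mp hvG₂).2⟩
      · rintro ⟨hvF, hv0⟩; exact ⟨hvF, (hmemG₂ v).mpr ⟨hFV hvF, hv0⟩⟩
    have hF'FG₂ : F' ⊆ F ∩ G₂ := fun v hv => ⟨hF'F hv, hGG₂ (hF'G hv)⟩
    by_cases hcase : F ∩ G₂ = F
    · -- Here F ⊆ G₂ : enlarge G inside 𝒯, contradiction with maximality.
      have hFsubG₂ : F ⊆ G₂ := fun v hv => (hcase.symm ▸ hv : v ∈ F ∩ G₂).2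
      have hs₂ne : (hVfin.toFinset.filter (fun v => 0 < eval v h₂)).Nonempty := by
        have : ∃ w ∈ V, w ∉ G₂ := by
          by_contra hc
          push_neg at hc
          exact hG₂V (subset_antisymm hG₂sub hc)
        obtain ⟨w, hwV, hwG₂⟩ := this
        refine ⟨w, Finset.mem_filter.mpr ⟨hVfin.mem_toFinset.mpr hwV, ?_⟩⟩
        rcases lt_or_eq_of_le (h₂V w hwV) with hlt | heq
        · exact hlt
        · exact absurd ((hmemG₂ w).mpr ⟨hwV, heq.symm⟩) hwG₂
      set s₂ := hVfin.toFinset.filter (fun v => 0 < eval v h₂) with hs₂def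
      set c := s₂.inf' hs₂ne (fun v => eval v h / eval v h₂) with hcdef
      set q : MvPolynomial (Fin d) ℝ := h - C c * h₂ with hqdef
      have hqe : ∀ v, eval v q = eval v h - c * eval v h₂ := fun v => by
        simp [hqdef]
      have hqV : NonnegOn V q := by
        intro v hv
        rw [hqe]
        rcases lt_or_eq_of_le (h₂V v hv) with hlt | heq
        · have hvs₂ : v ∈ s₂ := Finset.mem_filter.mpr ⟨hVfin.mem_toFinset.mpr hv, hlt⟩
          have := Finset.inf'_le (fun v => eval v h / eval v h₂) hvs₂
          have := (le_div_iff₀ hlt).mp this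
          linarith
        · have := hhV v hv
          rw [← heq]
          linarith
      set G₃ : Set (Fin d → ℝ) := {v ∈ V | eval v q = 0} with hG₃def
      have hGG₃ : G ⊆ G₃ := by
        intro v hv
        have hvV : v ∈ V := hGsub hv
        have hh0 : eval v h = 0 := (by rw [hGdef] at hv; exact hv.2)
        have hh₂0 : eval v h₂ = 0 := ((hmemG₂ v).mp (hGG₂ hv)).2
        exact ⟨hvV, by rw [hqe, hh0, hh₂0]; ring⟩
      obtain ⟨v₀, hv₀s₂, hv₀c⟩ := Finset.exists_mem_eq_inf' hs₂ne (fun v => eval v h / eval v h₂)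
      have hv₀V : v₀ ∈ V := hVfin.mem_toFinset.mp (Finset.mem_filter.mp hv₀s₂).1
      have hv₀pos : 0 < eval v₀ h₂ := (Finset.mem_filter.mp hv₀s₂).2
      have hv₀G₂ : v₀ ∉ G₂ := fun hc => by
        have := ((hmemG₂ v₀).mp hc).2; linarith
      have hv₀G : v₀ ∉ G := fun hc => hv₀G₂ (hGG₂ hc)
      have hv₀G₃ : v₀ ∈ G₃ := by
        refine ⟨hv₀V, ?_⟩
        rw [hqe, hcdef, hv₀c, div_mul_cancel₀ _ (ne_of_gt hv₀pos), sub_self]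
      have hG₃V : G₃ ≠ V := by
        have : ∃ w ∈ G₂, w ∉ G := by
          by_contra hc
          push_neg at hc
          exact hne2 (subset_antisymm hc hGG₂)
        obtain ⟨w, hwG₂, hwG⟩ := this
        have hwV : w ∈ V := hG₂sub hwG₂
        have hwh₂ : eval w h₂ = 0 := ((hmemG₂ w).mp hwG₂).2
        have hwh : 0 < eval w h := by
          rcases lt_or_eq_of_le (hhV w hwV) with hlt | heq
          · exact hlt
          · exact absurd (by rw [hGdef]; exact ⟨hwV, heq.symm⟩) hwG
        intro hEq
        have : w ∈ G₃ := hEq.symm ▸ hwV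
        have : eval w q = 0 := this.2
        rw [hqe, hwh₂] at this
        linarith
      have hFG₃ : F ∩ G₃ = F' := by
        rw [← hGF]
        ext v
        simp only [Set.mem_inter_iff]
        constructor
        · rintro ⟨hvF, hvV, hvq⟩
          have hvh₂ : eval v h₂ = 0 := ((hmemG₂ v).mp (hFsubG₂ hvF)).2
          rw [hqe, hvh₂] at hvq
          refine ⟨hvF, ?_⟩
          rw [hGdef]
          exact ⟨hvV, by linarith⟩
        · rintro ⟨hvF, hvG⟩
          exact ⟨hvF, hGG₃ hvG⟩
      have hG₃𝒯 : G₃ ∈ 𝒯 := ⟨⟨q, sub_mul_affLin hha h₂a c, hqV, rfl⟩, hG₃V, hFG₃⟩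
      have := hGtop G₃ hG₃𝒯 hGG₃
      exact hv₀G (this ▸ hv₀G₃)
    · -- Here F ∩ G₂ = F' : G₂ ∈ 𝒯, contradiction with maximality.
      have hFG₂ : F ∩ G₂ = F' := hmax' (F ∩ G₂) hFG₂face hcase hF'FG₂
      have hG₂𝒯 : G₂ ∈ 𝒯 := ⟨⟨h₂, h₂a, h₂V, hG₂def⟩, hG₂V, hFG₂⟩
      exact hne2 (hGtop G₂ hG₂𝒯 hGG₂)
  -- h is facet-defining for V, so its image has at most k values
  have hhfd : IsFacetDefining V h := ⟨hha, hhV, hGdef ▸ hGfacet⟩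
  have hcard : ((fun v => eval v h) '' V).ncard ≤ k := hkV h hhfd
  -- proportionality of h and ℓ on F
  have hs₃ne : (hVfin.toFinset.filter (fun v => eval v g = 0 ∧ 0 < eval v ℓ)).Nonempty := by
    have : ∃ v₁ ∈ F, v₁ ∉ F' := by
      by_contra hc
      push_neg at hc
      exact hne' (subset_antisymm hF'F hc)
    obtain ⟨v₁, hv₁F, hv₁F'⟩ := this
    refine ⟨v₁, Finset.mem_filter.mpr ⟨hVfin.mem_toFinset.mpr (hFV hv₁F), hv₁F.2, ?_⟩⟩
    rcases lt_or_eq_of_le (hℓF v₁ hv₁F) with hlt | heq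
    · exact hlt
    · exact absurd ⟨hv₁F, heq.symm⟩ hv₁F'
  set s₃ := hVfin.toFinset.filter (fun v => eval v g = 0 ∧ 0 < eval v ℓ) with hs₃def
  have hs₃mem : ∀ v ∈ s₃, v ∈ F ∧ 0 < eval v ℓ ∧ v ∉ F' := by
    intro v hv
    obtain ⟨hv1, hv2, hv3⟩ := Finset.mem_filter.mp hv
    refine ⟨⟨hVfin.mem_toFinset.mp hv1, hv2⟩, hv3, fun hc => by
      have := hc.2; linarith⟩
  have hhFpos : ∀ v ∈ F, v ∉ F' → 0 < eval v h := by
    intro v hv hv'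
    rcases lt_or_eq_of_le (hhV v (hFV hv)) with hlt | heq
    · exact hlt
    · have hvG : v ∈ G := by rw [hGdef]; exact ⟨hFV hv, heq.symm⟩
      exact absurd (hGF ▸ (⟨hv, hvG⟩ : v ∈ F ∩ G)) hv'
  set c' := s₃.inf' hs₃ne (fun v => eval v h / eval v ℓ) with hc'def
  have hc'pos : 0 < c' := by
    rw [hc'def, Finset.lt_inf'_iff]
    intro v hv
    obtain ⟨hvF, hvℓ, hvF'⟩ := hs₃mem v hv
    exact div_pos (hhFpos v hvF hvF') hvℓ
  set q' : MvPolynomial (Fin d) ℝ := h - C c' * ℓ with hq'def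
  have hq'e : ∀ v, eval v q' = eval v h - c' * eval v ℓ := fun v => by simp [hq'def]
  have hq'F : NonnegOn F q' := by
    intro v hv
    rw [hq'e]
    rcases lt_or_eq_of_le (hℓF v hv) with hlt | heq
    · have hvs₃ : v ∈ s₃ := Finset.mem_filter.mpr ⟨hVfin.mem_toFinset.mpr (hFV hv), hv.2, hlt⟩
      have := Finset.inf'_le (fun v => eval v h / eval v ℓ) hvs₃
      have := (le_div_iff₀ hlt).mp this
      linarith
    · have := hhV v (hFV hv)
      rw [← heq]
      linarith
  obtain ⟨w₀, hw₀s₃, hw₀c⟩ := Finset.exists_mem_eq_inf' hs₃ne (fun v => eval v h / eval v ℓ)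
  obtain ⟨hw₀F, hw₀ℓ, hw₀F'⟩ := hs₃mem w₀ hw₀s₃
  have hw₀Z : w₀ ∈ {v ∈ F | eval v q' = 0} := by
    refine ⟨hw₀F, ?_⟩
    rw [hq'e, hc'def, hw₀c, div_mul_cancel₀ _ (ne_of_gt hw₀ℓ), sub_self]
  have hZface : IsFaceOf F {v ∈ F | eval v q' = 0} :=
    ⟨q', sub_mul_affLin hha hℓa c', hq'F, rfl⟩
  have hF'Z : F' ⊆ {v ∈ F | eval v q' = 0} := by
    intro v hv
    have hvh : eval v h = 0 := by
      have := hF'G hv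
      rw [hGdef] at this
      exact this.2
    exact ⟨hv.1, by rw [hq'e, hvh, hv.2]; ring⟩
  have hZF : {v ∈ F | eval v q' = 0} = F := by
    by_contra hc
    have := hmax' _ hZface hc hF'Z
    exact hw₀F' (this ▸ hw₀Z)
  have hprop : ∀ v ∈ F, eval v h = c' * eval v ℓ := by
    intro v hv
    have hvZ : v ∈ {v ∈ F | eval v q' = 0} := hZF.symm ▸ hv
    have := hvZ.2
    rw [hq'e] at this
    linarith
  have him : (fun v => eval v h) '' F = (fun x => c' * x) '' ((fun v => eval v ℓ) '' F) := by
    rw [← Set.image_comp]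
    exact Set.image_congr fun v hv => hprop v hv
  calc ((fun v => eval v ℓ) '' F).ncard
      = ((fun x => c' * x) '' ((fun v => eval v ℓ) '' F)).ncard :=
        (Set.ncard_image_of_injective _ (mul_right_injective₀ (ne_of_gt hc'pos))).symm
    _ = ((fun v => eval v h) '' F).ncard := by rw [← him]
    _ ≤ ((fun v => eval v h) '' V).ncard :=
        Set.ncard_le_ncard (Set.image_mono hFV) (hVfin.image _)
    _ ≤ k := hcard

/-- If `H = {x : g x = 0}` is a supporting hyperplane of the finite point
configuration `V` (so `g` is a nonzero affine-linear function, nonnegative on `V`, vanishing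
at some point of `V`), then `Th(V ∩ H) ≤ Th(V)` and `Lev(V ∩ H) ≤ Lev(V)`:
Theta rank and levelness are face-hereditary. -/
theorem theta_levelness_face_hereditary {d : ℕ} (V : Set (Fin d → ℝ)) (hVfin : V.Finite)
    (g : MvPolynomial (Fin d) ℝ) (hg : IsAffLin g) (hg0 : g ≠ 0)
    (hgV : NonnegOn V g) (hsupp : ∃ v ∈ V, eval v g = 0) :
    thetaRank {v ∈ V | eval v g = 0} ≤ thetaRank V ∧
      levelness {v ∈ V | eval v g = 0} ≤ levelness V :=
  ⟨theta_part V hVfin g hg hgV, level_part V hVfin g hg hgV⟩
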